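/- (Justin's formula) For all words v, u over {a,b}: ψ(vu) = μ_v(ψ(u)) ψ(v), where μ_v is the composition μ_{x1} ∘ ⋯ ∘ μ_{xn} for v = x1⋯xn. -/

import Mathlib

def palClosure (w : List Bool) : List Bool :=
  let k := Nat.find (p := fun k => (w.drop k).reverse = w.drop k)
    ⟨w.length, by simp⟩
  w.take k ++ w.drop k ++ (w.take k).reverse

def psi (v : List Bool) : List Bool := v.foldl (fun w x => palClosure (w ++ [x])) []

def E (v : List Bool) : List Bool := v.map (!·)

def mu (x : Bool) (w : List Bool) : List Bool := w.flatMap (fun y => if y = x then [x] else [x, y])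

def muW : List Bool → List Bool → List Bool
  | [], w => w
  | x :: v, w => mu x (muW v w)

def vN (n : ℕ) : List Bool := (List.range n).map (fun i => decide (i % 2 = 1))

def fibF : ℕ → ℕ
  | 0 => 1
  | 1 => 1
  | n + 2 => fibF (n + 1) + fibF n

def HasPeriod (w : List Bool) (p : ℕ) : Prop :=
  0 < p ∧ ∀ i j (hi : i < w.length) (hj : j < w.length),
    i % p = j % p → w.get ⟨i, hi⟩ = w.get ⟨j, hj⟩

noncomputable def minPeriod (w : List Bool) : ℕ := sInf {p | HasPeriod w p}

def dOp : List Bool → List Bool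
  | x :: y :: u => y :: x :: u
  | w => w

def cOp (v : List Bool) : List Bool := (dOp v.reverse).reverse

def contAux : List ℕ → ℕ
  | [] => 1
  | [a] => a
  | a :: b :: t => a * contAux (b :: t) + contAux t


def nu (x : Bool) (w : List Bool) : List Bool := w.flatMap (fun y => if y = x then [x] else [y, x])

@[simp] lemma mu_nil (x : Bool) : mu x [] = [] := rfl
@[simp] lemma nu_nil (x : Bool) : nu x [] = [] := rfl
lemma mu_cons (x a : Bool) (w : List Bool) :
    mu x (a :: w) = (if a = x then [x] else [x, a]) ++ mu x w := rfl
lemma nu_cons (x a : Bool) (w : List Bool) :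
    nu x (a :: w) = (if a = x then [x] else [a, x]) ++ nu x w := rfl
lemma mu_append (x : Bool) (u v : List Bool) : mu x (u ++ v) = mu x u ++ mu x v :=
  List.flatMap_append ..
lemma nu_append (x : Bool) (u v : List Bool) : nu x (u ++ v) = nu x u ++ nu x v :=
  List.flatMap_append ..

lemma mu_concat_x (x : Bool) (w : List Bool) : mu x w ++ [x] = x :: nu x w := by
  induction w with
  | nil => rfl
  | cons a w ih =>
    rw [mu_cons, nu_cons]
    by_cases h : a = x <;> simp [h] <;> simpa using ih

lemma mu_reverse (x : Bool) (w : List Bool) : (mu x w).reverse = nu x w.reverse := by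
  induction w with
  | nil => rfl
  | cons a w ih =>
    rw [mu_cons, List.reverse_append, ih, List.reverse_cons, nu_append]
    by_cases h : a = x <;> simp [h, nu_cons]

lemma mu_eq_nil (x : Bool) (w : List Bool) : mu x w = [] ↔ w = [] := by
  cases w with
  | nil => simp
  | cons a w => rw [mu_cons]; by_cases h : a = x <;> simp [h]

lemma mu_head (x : Bool) (w : List Bool) (h : w ≠ []) : ∃ t, mu x w = x :: t := by
  cases w with
  | nil => exact absurd rfl h
  | cons a w => rw [mu_cons]; by_cases h : a = x <;> simp [h]

def unmu (x : Bool) : List Bool → List Bool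
  | [] => []
  | [_] => [x]
  | a :: b :: l => if b = x then x :: unmu x (b :: l) else b :: unmu x l

lemma unmu_mu (x : Bool) (w : List Bool) : unmu x (mu x w) = w := by
  induction w with
  | nil => rfl
  | cons a w ih =>
    by_cases h : a = x
    · rw [mu_cons, if_pos h, h]
      rcases eq_or_ne w [] with hw | hw
      · subst hw; simp [unmu]
      · obtain ⟨t, ht⟩ := mu_head x w hw
        have h1 : ([x] ++ mu x w) = x :: x :: t := by rw [ht]; rfl
        rw [h1, show unmu x (x :: x :: t) = x :: unmu x (x :: t) from by simp [unmu],
          ← ht, ih]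
    · rw [mu_cons, if_neg h]
      have h1 : ([x, a] ++ mu x w) = x :: a :: mu x w := rfl
      rw [h1, show unmu x (x :: a :: mu x w) = a :: unmu x (mu x w) from by simp [unmu, h], ih]

lemma mu_inj (x : Bool) {u v : List Bool} (h : mu x u = mu x v) : u = v := by
  have := congrArg (unmu x) h
  rwa [unmu_mu, unmu_mu] at this

lemma nu_eq_mu_rev (x : Bool) (w : List Bool) : nu x w = (mu x w.reverse).reverse := by
  rw [mu_reverse, List.reverse_reverse]

lemma nu_inj (x : Bool) {u v : List Bool} (h : nu x u = nu x v) : u = v := by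
  rw [nu_eq_mu_rev, nu_eq_mu_rev] at h
  have := mu_inj x (List.reverse_injective h)
  exact List.reverse_injective this

lemma pal_mu_iff (x : Bool) (u : List Bool) :
    (mu x u ++ [x]).reverse = mu x u ++ [x] ↔ u.reverse = u := by
  rw [List.reverse_append, List.reverse_singleton, List.singleton_append, mu_reverse,
    ← mu_concat_x]
  constructor
  · intro h
    exact mu_inj x ((List.append_left_inj [x]).mp h)
  · intro h; rw [h]

lemma pal_mu2_iff (x : Bool) (u : List Bool) :
    ((!x) :: mu x u).reverse = (!x) :: mu x u ↔ ((!x) :: u).reverse = (!x) :: u := by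
  rw [List.reverse_cons, mu_reverse, ← List.append_left_inj [x], List.append_assoc,
    show [!x] ++ [x] = nu x [!x] from by simp [nu_cons, Bool.not_ne_self], ← nu_append,
    List.cons_append, mu_concat_x]
  rw [show ((!x) :: x :: nu x u) = nu x ((!x) :: u) from by
      simp [nu_cons, Bool.not_ne_self],
    show u.reverse ++ [!x] = ((!x) :: u).reverse from by simp]
  constructor
  · intro h
    rw [nu_inj x h]
  · intro h; rw [h]

lemma head_mu_append (x : Bool) (v t : List Bool) : (mu x v ++ x :: t).head? = some x := by
  cases v with
  | nil => rfl
  | cons a v => rw [mu_cons]; by_cases h : a = x <;> simp [h]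

lemma not_pal_of_ends {l : List Bool} {a b : Bool} (hab : a ≠ b) (h1 : l.head? = some a)
    (h2 : l.getLast? = some b) : ¬ (l.reverse = l) := by
  intro h
  have := (List.head?_reverse : l.reverse.head? = l.getLast?)
  rw [h, h1, h2] at this
  exact hab (Option.some.injEq .. ▸ this)

lemma take_decomp (w : List Bool) {i i' : ℕ} (h : i ≤ i') :
    w.take i' = w.take i ++ (w.take i').drop i := by
  conv_lhs => rw [← List.take_append_drop i (w.take i')]
  rw [List.take_take, min_eq_left h]

lemma mu_take_mono (x : Bool) (w : List Bool) {i i' : ℕ} (h : i ≤ i') :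
    (mu x (w.take i)).length ≤ (mu x (w.take i')).length := by
  rw [take_decomp w h, mu_append, List.length_append]
  exact Nat.le_add_right _ _

lemma mu_take_strict (x : Bool) (w : List Bool) {i i' : ℕ} (h : i < i') (h' : i' ≤ w.length) :
    (mu x (w.take i)).length < (mu x (w.take i')).length := by
  rw [take_decomp w h.le, mu_append, List.length_append]
  have hne : (w.take i').drop i ≠ [] := by
    rw [ne_eq, List.drop_eq_nil_iff]
    rw [List.length_take]
    omega
  have : mu x ((w.take i').drop i) ≠ [] := fun hc => hne ((mu_eq_nil x _).mp hc)
  have := List.length_pos_iff.mpr this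
  omega

lemma pos_split (x : Bool) : ∀ (w : List Bool) (j : ℕ), j ≤ (mu x w).length →
    (∃ i, i ≤ w.length ∧ j = (mu x (w.take i)).length ∧ (mu x w).drop j = mu x (w.drop i)) ∨
    (∃ i u, w.drop i = (!x) :: u ∧ j = (mu x (w.take i)).length + 1 ∧
      (mu x w).drop j = (!x) :: mu x u) := by
  intro w
  induction w with
  | nil =>
    intro j hj
    left
    refine ⟨0, by simp, ?_, ?_⟩ <;> simp at hj <;> simp [hj]
  | cons a w ih =>
    intro j hj
    match j with
    | 0 => left; exact ⟨0, by simp, by simp, by simp⟩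
    | (j : ℕ) + 1 =>
      by_cases hax : a = x
      · have hmu : mu x (a :: w) = x :: mu x w := by rw [mu_cons, if_pos hax]; rfl
        have hj' : j ≤ (mu x w).length := by rw [hmu] at hj; simpa using hj
        rcases ih j hj' with ⟨i, h1, h2, h3⟩ | ⟨i, u, h1, h2, h3⟩
        · left
          refine ⟨i + 1, by simpa using h1, ?_, ?_⟩
          · rw [show (a :: w).take (i+1) = a :: w.take i from rfl, mu_cons, if_pos hax]
            simpa using h2
          · rw [hmu, List.drop_succ_cons, h3, List.drop_succ_cons]
        · right
          refine ⟨i + 1, u, by simpa using h1, ?_, ?_⟩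
          · rw [show (a :: w).take (i+1) = a :: w.take i from rfl, mu_cons, if_pos hax]
            simp only [List.length_append, List.length_cons, List.length_nil]
            omega
          · rw [hmu, List.drop_succ_cons, h3]
      · have hax' : a = !x := by cases a <;> cases x <;> simp_all
        have hmu : mu x (a :: w) = x :: a :: mu x w := by rw [mu_cons, if_neg hax]; rfl
        match j with
        | 0 =>
          right
          refine ⟨0, w, by simp [hax'], by simp, ?_⟩
          rw [hmu, hax']
          rfl
        | (j : ℕ) + 1 =>
          have hj' : j ≤ (mu x w).length := by rw [hmu] at hj; simpa using hj
          rcases ih j hj' with ⟨i, h1, h2, h3⟩ | ⟨i, u, h1, h2, h3⟩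
          · left
            refine ⟨i + 1, by simpa using h1, ?_, ?_⟩
            · rw [show (a :: w).take (i+1) = a :: w.take i from rfl, mu_cons, if_neg hax]
              simp only [List.length_append, List.length_cons, List.length_nil]
              omega
            · rw [hmu, List.drop_succ_cons, List.drop_succ_cons, h3, List.drop_succ_cons]
          · right
            refine ⟨i + 1, u, by simpa using h1, ?_, ?_⟩
            · rw [show (a :: w).take (i+1) = a :: w.take i from rfl, mu_cons, if_neg hax]
              simp only [List.length_append, List.length_cons, List.length_nil]
              omega
            · rw [hmu, List.drop_succ_cons, List.drop_succ_cons, h3]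

lemma palClosure_eq_of (W : List Bool) (k : ℕ) (hk : (W.drop k).reverse = W.drop k)
    (hmin : ∀ j < k, ¬ ((W.drop j).reverse = W.drop j)) :
    palClosure W = W ++ (W.take k).reverse := by
  unfold palClosure
  have : Nat.find (p := fun k => (W.drop k).reverse = W.drop k) ⟨W.length, by simp⟩ = k :=
    (Nat.find_eq_iff _).mpr ⟨hk, hmin⟩
  simp only [this, List.take_append_drop]

lemma L1 (x : Bool) (w : List Bool) :
    palClosure (mu x w ++ [x]) = mu x (palClosure w) ++ [x] := by
  have hex : ∃ k, ((w.drop k).reverse = w.drop k) := ⟨w.length, by simp⟩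
  set i₀ := Nat.find hex with hi₀def
  have hp : (w.drop i₀).reverse = w.drop i₀ := Nat.find_spec hex
  have hmin : ∀ j < i₀, ¬ ((w.drop j).reverse = w.drop j) := fun j hj => Nat.find_min hex hj
  have hi₀le : i₀ ≤ w.length := Nat.find_min' hex (by simp)
  have hdecomp : mu x w = mu x (w.take i₀) ++ mu x (w.drop i₀) := by
    rw [← mu_append, List.take_append_drop]
  set j₀ := (mu x (w.take i₀)).length with hj₀def
  have hj₀le : j₀ ≤ (mu x w).length := by rw [hdecomp, List.length_append]; omega
  have hdropj₀ : (mu x w ++ [x]).drop j₀ = mu x (w.drop i₀) ++ [x] := by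
    rw [hdecomp, List.append_assoc, hj₀def, List.drop_left]
  have htakej₀ : (mu x w ++ [x]).take j₀ = mu x (w.take i₀) := by
    rw [hdecomp, List.append_assoc, hj₀def, List.take_left]
  have hk : ((mu x w ++ [x]).drop j₀).reverse = (mu x w ++ [x]).drop j₀ := by
    rw [hdropj₀]; exact (pal_mu_iff x _).mpr hp
  have hmin' : ∀ j < j₀, ¬ (((mu x w ++ [x]).drop j).reverse = (mu x w ++ [x]).drop j) := by
    intro j hj
    have hjle : j ≤ (mu x w).length := le_trans hj.le hj₀le
    have hdropj : (mu x w ++ [x]).drop j = (mu x w).drop j ++ [x] :=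
      List.drop_append_of_le_length hjle
    rcases pos_split x w j hjle with ⟨i, h1, h2, h3⟩ | ⟨i, u, h1, h2, h3⟩
    · have hii : i < i₀ := by
        by_contra hc
        exact absurd (hj₀def ▸ h2 ▸ mu_take_mono x w (not_lt.mp hc)) (not_le.mpr hj)
      rw [hdropj, h3]
      intro hpal
      exact hmin i hii ((pal_mu_iff x _).mp hpal)
    · rw [hdropj, h3]
      refine not_pal_of_ends (Bool.not_ne_self x) rfl ?_
      rw [show ((!x) :: mu x u) ++ [x] = ((!x) :: mu x u) ++ [x] from rfl]
      exact List.getLast?_concat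
  rw [palClosure_eq_of _ j₀ hk hmin', palClosure_eq_of w i₀ hp hmin, htakej₀,
    mu_append, mu_reverse]
  rw [List.append_assoc, List.append_assoc, List.singleton_append, ← mu_concat_x]

lemma L2 (x : Bool) (w' : List Bool) :
    palClosure (mu x (w' ++ [!x])) = mu x (palClosure (w' ++ [!x])) ++ [x] := by
  set w := w' ++ [!x] with hwdef
  have hex : ∃ k, ((w.drop k).reverse = w.drop k) := ⟨w.length, by simp⟩
  set i₀ := Nat.find hex with hi₀def
  have hp : (w.drop i₀).reverse = w.drop i₀ := Nat.find_spec hex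
  have hmin : ∀ j < i₀, ¬ ((w.drop j).reverse = w.drop j) := fun j hj => Nat.find_min hex hj
  have hi₀le : i₀ ≤ w'.length := by
    refine Nat.find_min' hex ?_
    rw [hwdef, List.drop_left]
    simp
  have hlen : w.length = w'.length + 1 := by rw [hwdef]; simp
  have hdrop : w.drop i₀ = w'.drop i₀ ++ [!x] := List.drop_append_of_le_length hi₀le
  have hlast : (w.drop i₀).getLast? = some (!x) := by rw [hdrop]; exact List.getLast?_concat
  have hhead : (w.drop i₀).head? = some (!x) := by
    rw [← hp, List.head?_reverse]; exact hlast
  obtain ⟨u₀, hu₀⟩ : ∃ u₀, w.drop i₀ = (!x) :: u₀ := by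
    cases h : w.drop i₀ with
    | nil => rw [h] at hhead; simp at hhead
    | cons c u => rw [h] at hhead; simp at hhead; exact ⟨u, by rw [hhead]⟩
  have hdecomp : mu x w = mu x (w.take i₀) ++ (x :: (!x) :: mu x u₀) := by
    conv_lhs => rw [← List.take_append_drop i₀ w, mu_append, hu₀]
    rw [mu_cons, if_neg (by simp [Bool.not_ne_self])]
    rfl
  set j₀ := (mu x (w.take i₀)).length + 1 with hj₀def
  have hj₀le : j₀ ≤ (mu x w).length := by
    rw [hdecomp, List.length_append]
    simp only [List.length_cons]
    omega
  have hdropj₀ : (mu x w).drop j₀ = (!x) :: mu x u₀ := by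
    rw [hdecomp, hj₀def, List.drop_append]
    simp
  have htakej₀ : (mu x w).take j₀ = mu x (w.take i₀) ++ [x] := by
    rw [hdecomp, hj₀def, List.take_append]
    simp
  have hk : ((mu x w).drop j₀).reverse = (mu x w).drop j₀ := by
    rw [hdropj₀]
    exact (pal_mu2_iff x u₀).mpr (hu₀ ▸ hp)
  have hmin' : ∀ j < j₀, ¬ (((mu x w).drop j).reverse = (mu x w).drop j) := by
    intro j hj
    have hjle : j ≤ (mu x w).length := le_trans hj.le hj₀le
    rcases pos_split x w j hjle with ⟨i, h1, h2, h3⟩ | ⟨i, u, h1, h2, h3⟩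
    · have hi : i < w.length := by
        rcases lt_or_eq_of_le h1 with h | h
        · exact h
        · exfalso
          rw [h, List.take_length] at h2
          have h4 : j₀ ≤ j := h2 ▸ hj₀le
          omega
      have hi' : i ≤ w'.length := by omega
      have hdi : w.drop i = w'.drop i ++ [!x] := List.drop_append_of_le_length hi'
      rw [h3, hdi, mu_append,
        show mu x [!x] = [x, !x] from by rw [show ([!x] : List Bool) = (!x) :: [] from rfl, mu_cons, if_neg (by simp [Bool.not_ne_self])]; simp,
        show mu x (w'.drop i) ++ [x, !x] = (mu x (w'.drop i) ++ [x]) ++ [!x] from by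
          rw [List.append_assoc]; rfl]
      refine not_pal_of_ends (a := x) (b := !x) (Bool.not_ne_self x).symm ?_ (List.getLast?_concat)
      rw [List.append_assoc]
      exact head_mu_append x _ _
    · have hii : i < i₀ := by
        by_contra hc
        have := mu_take_mono x w (not_lt.mp hc)
        omega
      rw [h3]
      intro hpal
      have := (pal_mu2_iff x u).mp hpal
      rw [← h1] at this
      exact hmin i hii this
  rw [palClosure_eq_of _ j₀ hk hmin', palClosure_eq_of w i₀ hp hmin, htakej₀, mu_append,
    List.reverse_append, List.reverse_singleton, List.singleton_append, mu_reverse,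
    ← mu_concat_x, List.append_assoc]
  simp only [hwdef, mu_append, List.append_assoc, mu_cons, if_neg (Bool.not_ne_self x)]

lemma psi_concat (u : List Bool) (y : Bool) : psi (u ++ [y]) = palClosure (psi u ++ [y]) := by
  simp [psi, List.foldl_append]

lemma justin1 (v : List Bool) (x : Bool) : psi (x :: v) = mu x (psi v) ++ [x] := by
  induction v using List.reverseRecOn with
  | nil =>
    show psi ([] ++ [x]) = mu x (psi []) ++ [x]
    rw [psi_concat]
    show palClosure ([] ++ [x]) = [] ++ [x]
    rw [List.nil_append, palClosure_eq_of [x] 0 (by simp) (by simp)]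
    simp
  | append_singleton v y ih =>
    have h0 : x :: (v ++ [y]) = (x :: v) ++ [y] := rfl
    rw [h0, psi_concat, ih, psi_concat]
    have hy : y = x ∨ y = !x := by cases y <;> cases x <;> simp
    rcases hy with hy | hy
    · rw [hy, show (mu x (psi v) ++ [x]) ++ [x] = mu x (psi v ++ [x]) ++ [x] from by
        rw [mu_append, show mu x [x] = [x] from by rw [show ([x] : List Bool) = x :: [] from rfl, mu_cons, if_pos rfl]; rfl]]
      exact L1 x (psi v ++ [x])
    · rw [hy, show (mu x (psi v) ++ [x]) ++ [!x] = mu x (psi v ++ [!x]) from by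
        rw [mu_append, show mu x [!x] = [x, !x] from by
          rw [show ([!x] : List Bool) = (!x) :: [] from rfl, mu_cons, if_neg (Bool.not_ne_self x)]; rfl,
          List.append_assoc]; rfl]
      exact L2 x (psi v)

theorem stmt6 (v u : List Bool) : psi (v ++ u) = muW v (psi u) ++ psi v := by
  induction v with
  | nil => simp [psi, muW]
  | cons x v ih =>
    have h0 : (x :: v) ++ u = x :: (v ++ u) := rfl
    rw [h0, justin1, ih, justin1 v x, mu_append]
    show mu x (muW v (psi u)) ++ mu x (psi v) ++ [x] = mu x (muW v (psi u)) ++ (mu x (psi v) ++ [x])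
    rw [List.append_assoc]
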